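/- Let p be an odd prime and α ∈ p^{-1}S with tr(α) ∈ Z and det(α) ∈ p^{-1}Z. Then the number of cosets γ ∈ Γ_0(p)\SL_2(Z) such that α ∈ γ^{-1} S(1/p) γ equals 1 if α ∉ S, and equals p+1 if α ∈ S. -/

import Mathlib

open scoped Classical

/-- The lattice `R(C/B) ⊆ M₂(ℚ)`. -/
def Rlat (C B : ℕ) : Set (Matrix (Fin 2) (Fin 2) ℚ) :=
  {x | (∃ n : ℤ, x 0 0 = n) ∧ (∃ n : ℤ, x 1 1 = n) ∧
       (∃ n : ℤ, x 0 1 = (n : ℚ) / B) ∧ (∃ n : ℤ, x 1 0 = (C : ℚ) * n)}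

/-- `S = ℤ + 2 M₂(ℤ)`, viewed inside `M₂(ℚ)`. -/
def Sset : Set (Matrix (Fin 2) (Fin 2) ℚ) :=
  {α | ∃ (m : ℤ) (γ : Matrix (Fin 2) (Fin 2) ℤ),
    α = (m : ℚ) • (1 : Matrix (Fin 2) (Fin 2) ℚ) + (2 : ℚ) • γ.map (Int.cast : ℤ → ℚ)}

/-- `S(1/p) = ℤ + 2 R(1/p) ⊆ M₂(ℚ)`. -/
def SOneOverP (p : ℕ) : Set (Matrix (Fin 2) (Fin 2) ℚ) :=
  {α | ∃ (m : ℤ) (β : Matrix (Fin 2) (Fin 2) ℚ), β ∈ Rlat 1 p ∧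
    α = (m : ℚ) • (1 : Matrix (Fin 2) (Fin 2) ℚ) + (2 : ℚ) • β}

namespace CosetCount
open Matrix CongruenceSubgroup

def rep (k : ℤ) : Matrix.SpecialLinearGroup (Fin 2) ℤ :=
  ⟨!![0, -1; 1, k], by simp [Matrix.det_fin_two_of]⟩

/-- bottom row of an SL2(Z) matrix is nonzero mod p -/
lemma bottom_ne (p : ℕ) [Fact p.Prime] (γ : Matrix.SpecialLinearGroup (Fin 2) ℤ)
    (hc : ((γ 1 0 : ℤ) : ZMod p) = 0) : ((γ 1 1 : ℤ) : ZMod p) ≠ 0 := by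
  intro hd
  have h2 : γ 0 0 * γ 1 1 - γ 0 1 * γ 1 0 = 1 := by
    have := γ.2; rw [Matrix.det_fin_two] at this; exact this
  have : ((γ 0 0 : ℤ) : ZMod p) * ((γ 1 1 : ℤ):ZMod p)
      - ((γ 0 1 : ℤ):ZMod p) * ((γ 1 0 : ℤ):ZMod p) = 1 := by
    exact_mod_cast congrArg (fun n : ℤ => ((n : ZMod p))) h2
  rw [hc, hd] at this
  simp at this

/-- the invariant: class of the bottom row mod p -/
noncomputable def f (p : ℕ) (γ : Matrix.SpecialLinearGroup (Fin 2) ℤ) : Option (ZMod p) :=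
  if ((γ 1 0 : ℤ) : ZMod p) = 0 then none
  else some (((γ 1 1 : ℤ) : ZMod p) * ((γ 1 0 : ℤ) : ZMod p)⁻¹)

lemma f_wd (p : ℕ) [Fact p.Prime] (γ γ' : Matrix.SpecialLinearGroup (Fin 2) ℤ)
    (h : γ' * γ⁻¹ ∈ Gamma0 p) : f p γ = f p γ' := by
  set h₀ : Matrix.SpecialLinearGroup (Fin 2) ℤ := γ' * γ⁻¹ with hh
  have hγ' : γ' = h₀ * γ := by rw [hh]; group
  have hmem : ((h₀ 1 0 : ℤ) : ZMod p) = 0 := Gamma0_mem.mp h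
  have hu : ((h₀ 0 0 : ℤ) : ZMod p) * ((h₀ 1 1 : ℤ) : ZMod p) = 1 := by
    have h2 : h₀ 0 0 * h₀ 1 1 - h₀ 0 1 * h₀ 1 0 = 1 := by
      have := h₀.2; rw [Matrix.det_fin_two] at this; exact this
    have : ((h₀ 0 0 : ℤ) : ZMod p) * ((h₀ 1 1 : ℤ):ZMod p)
        - ((h₀ 0 1 : ℤ):ZMod p) * ((h₀ 1 0 : ℤ):ZMod p) = 1 := by
      exact_mod_cast congrArg (fun n : ℤ => ((n : ZMod p))) h2
    rw [hmem] at this; linear_combination this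
  have hune : ((h₀ 1 1 : ℤ) : ZMod p) ≠ 0 := by
    intro h0; rw [h0, mul_zero] at hu; simp at hu
  have hc' : ((γ' 1 0 : ℤ) : ZMod p) = ((h₀ 1 1 : ℤ):ZMod p) * ((γ 1 0 : ℤ):ZMod p) := by
    rw [hγ']
    have : ((h₀ * γ) 1 0 : ℤ) = h₀ 1 0 * γ 0 0 + h₀ 1 1 * γ 1 0 := by
      simp [Matrix.SpecialLinearGroup.coe_mul, Matrix.mul_apply, Fin.sum_univ_two]
    rw [this]; push_cast; rw [hmem]; ring
  have hd' : ((γ' 1 1 : ℤ) : ZMod p) = ((h₀ 1 1 : ℤ):ZMod p) * ((γ 1 1 : ℤ):ZMod p) := by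
    rw [hγ']
    have : ((h₀ * γ) 1 1 : ℤ) = h₀ 1 0 * γ 0 1 + h₀ 1 1 * γ 1 1 := by
      simp [Matrix.SpecialLinearGroup.coe_mul, Matrix.mul_apply, Fin.sum_univ_two]
    rw [this]; push_cast; rw [hmem]; ring
  unfold f
  by_cases hc : ((γ 1 0 : ℤ) : ZMod p) = 0
  · rw [if_pos hc, if_pos (by rw [hc', hc, mul_zero])]
  · have hc'0 : ((γ' 1 0 : ℤ) : ZMod p) ≠ 0 := by
      rw [hc']; exact mul_ne_zero hune hc
    rw [if_neg hc, if_neg hc'0, hd', hc']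
    field_simp


lemma mul_inv_10 (γ γ' : Matrix.SpecialLinearGroup (Fin 2) ℤ) :
    ((γ' * γ⁻¹) 1 0 : ℤ) = γ' 1 0 * γ 1 1 - γ' 1 1 * γ 1 0 := by
  have h2 : ((γ⁻¹ : Matrix.SpecialLinearGroup (Fin 2) ℤ) : Matrix (Fin 2) (Fin 2) ℤ)
      = !![γ 1 1, -(γ 0 1); -(γ 1 0), γ 0 0] := by
    rw [Matrix.SpecialLinearGroup.SL2_inv_expl γ]; rfl
  show ((γ' * γ⁻¹ : Matrix.SpecialLinearGroup (Fin 2) ℤ) : Matrix (Fin 2) (Fin 2) ℤ) 1 0 = _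
  rw [Matrix.SpecialLinearGroup.coe_mul, h2, Matrix.mul_apply, Fin.sum_univ_two]
  simp [Matrix.cons_val_zero, Matrix.cons_val_one]
  ring

/-- membership in Gamma0 from equality of invariants -/
lemma gamma0_of_f (p : ℕ) [Fact p.Prime] (γ γ' : Matrix.SpecialLinearGroup (Fin 2) ℤ)
    (h : ((γ' 1 0 : ℤ) : ZMod p) * ((γ 1 1 : ℤ) : ZMod p)
        = ((γ' 1 1 : ℤ) : ZMod p) * ((γ 1 0 : ℤ) : ZMod p)) :
    γ' * γ⁻¹ ∈ Gamma0 p := by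
  rw [Gamma0_mem]
  have := mul_inv_10 γ γ'
  have : (((γ' * γ⁻¹) 1 0 : ℤ) : ZMod p)
      = ((γ' 1 0 : ℤ) : ZMod p) * ((γ 1 1 : ℤ) : ZMod p)
        - ((γ' 1 1 : ℤ) : ZMod p) * ((γ 1 0 : ℤ) : ZMod p) := by
    rw [this]; push_cast; ring
  rw [this, h, sub_self]


noncomputable def fbar (p : ℕ) [Fact p.Prime] : Quotient (QuotientGroup.rightRel (Gamma0 p)) → Option (ZMod p) :=
  Quotient.lift (f p) (fun γ γ' h =>
    f_wd p γ γ' ((QuotientGroup.rightRel_apply).mp h))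

lemma f_eq_rel (p : ℕ) [Fact p.Prime] (γ γ' : Matrix.SpecialLinearGroup (Fin 2) ℤ) (h : f p γ = f p γ') :
    Quotient.mk (QuotientGroup.rightRel (Gamma0 p)) γ
      = Quotient.mk (QuotientGroup.rightRel (Gamma0 p)) γ' := by
  apply Quotient.sound
  refine QuotientGroup.rightRel_apply.mpr (gamma0_of_f p γ γ' ?_)
  unfold f at h
  by_cases hc : ((γ 1 0 : ℤ) : ZMod p) = 0
  · by_cases hc' : ((γ' 1 0 : ℤ) : ZMod p) = 0
    · rw [hc, hc']; ring
    · rw [if_pos hc, if_neg hc'] at h; exact absurd h (by simp)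
  · by_cases hc' : ((γ' 1 0 : ℤ) : ZMod p) = 0
    · rw [if_neg hc, if_pos hc'] at h; exact absurd h (by simp)
    · rw [if_neg hc, if_neg hc'] at h
      have h2 := Option.some_injective _ h
      field_simp at h2
      linear_combination h2
lemma fbar_bij (p : ℕ) [Fact p.Prime] : Function.Bijective (fbar p) := by
  constructor
  · intro q q'
    induction q using Quotient.ind
    induction q' using Quotient.ind
    exact fun h => f_eq_rel p _ _ h
  · intro o
    match o with
    | none =>
      refine ⟨Quotient.mk _ 1, ?_⟩
      show f p 1 = none
      rw [f, if_pos]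
      show (((1 : Matrix (Fin 2) (Fin 2) ℤ) 1 0 : ℤ) : ZMod p) = 0
      norm_num
    | some k =>
      refine ⟨Quotient.mk _ (rep k.val), ?_⟩
      show f p (rep k.val) = some k
      have h10 : ((rep (k.val : ℤ)) 1 0 : ℤ) = 1 := rfl
      have h11 : ((rep (k.val : ℤ)) 1 1 : ℤ) = (k.val : ℤ) := rfl
      rw [f, h10, h11, if_neg (by rw [Int.cast_one]; exact one_ne_zero)]
      congr 1
      push_cast
      simp [ZMod.natCast_val, ZMod.cast_id]

lemma card_quot (p : ℕ) [Fact p.Prime] : Nat.card (Quotient (QuotientGroup.rightRel (Gamma0 p))) = p + 1 := by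
  rw [Nat.card_eq_of_bijective _ (fbar_bij p)]
  haveI : NeZero p := ⟨(Fact.out : p.Prime).ne_zero⟩
  simp [Nat.card_eq_fintype_card, ZMod.card]

lemma solve2 {F : Type*} [Field F] {a b c d u v : F} (h1 : d*u - c*v = 0)
    (h2 : -(b*u) + a*v = 0) (e : a*d - b*c = 1) : u = 0 ∧ v = 0 :=
  ⟨by linear_combination a * h1 + c * h2 - u * e,
   by linear_combination b * h1 + d * h2 - v * e⟩

set_option maxHeartbeats 1600000 in
lemma mem_iff (p : ℕ) [Fact p.Prime] (hp2 : p ≠ 2) (m x y z w : ℤ)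
    (X Y Z W : ℤ) (hX : X = m + 2*x) (hY : Y = 2*y) (hZ : Z = 2*z) (hW : W = m + 2*w)
    (htr : (p:ℤ) ∣ X + W)
    (α : Matrix (Fin 2) (Fin 2) ℚ)
    (h00 : α 0 0 = (X:ℚ)/p) (h01 : α 0 1 = (Y:ℚ)/p)
    (h10 : α 1 0 = (Z:ℚ)/p) (h11 : α 1 1 = (W:ℚ)/p)
    (γ : Matrix.SpecialLinearGroup (Fin 2) ℤ) :
    (((γ : Matrix (Fin 2) (Fin 2) ℤ).map (Int.cast : ℤ → ℚ)) * α *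
      (((γ⁻¹ : Matrix.SpecialLinearGroup (Fin 2) ℤ) :
        Matrix (Fin 2) (Fin 2) ℤ).map (Int.cast : ℤ → ℚ)) ∈ SOneOverP p)
    ↔ (((γ 1 0 : ℤ):ZMod p) * ((X : ℤ):ZMod p) + ((γ 1 1 : ℤ):ZMod p) * ((Z:ℤ):ZMod p) = 0 ∧
       ((γ 1 0 : ℤ):ZMod p) * ((Y : ℤ):ZMod p) + ((γ 1 1 : ℤ):ZMod p) * ((W:ℤ):ZMod p) = 0) := by
  have hp0 : (p:ℚ) ≠ 0 := Nat.cast_ne_zero.mpr (Fact.out : p.Prime).ne_zero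
  set a : ℤ := γ 0 0 with ha
  set b : ℤ := γ 0 1 with hb
  set c : ℤ := γ 1 0 with hc
  set d : ℤ := γ 1 1 with hd
  have hdet : a*d - b*c = 1 := by
    have := γ.2; rw [Matrix.det_fin_two] at this; exact this
  set N00 : ℤ := a*(X*d - Y*c) + b*(Z*d - W*c) with hN00
  set N01 : ℤ := a*(-(X*b) + Y*a) + b*(-(Z*b) + W*a) with hN01
  set N10 : ℤ := c*(X*d - Y*c) + d*(Z*d - W*c) with hN10
  set N11 : ℤ := c*(-(X*b) + Y*a) + d*(-(Z*b) + W*a) with hN11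
  have hinv : ((γ⁻¹ : Matrix.SpecialLinearGroup (Fin 2) ℤ) : Matrix (Fin 2) (Fin 2) ℤ)
      = !![d, -b; -c, a] := by
    rw [Matrix.SpecialLinearGroup.SL2_inv_expl γ]; rfl
  have hP : ((γ : Matrix (Fin 2) (Fin 2) ℤ).map (Int.cast : ℤ → ℚ)) * α *
      (((γ⁻¹ : Matrix.SpecialLinearGroup (Fin 2) ℤ) :
        Matrix (Fin 2) (Fin 2) ℤ).map (Int.cast : ℤ → ℚ))
      = !![(N00:ℚ)/p, (N01:ℚ)/p; (N10:ℚ)/p, (N11:ℚ)/p] := by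
    rw [hinv]
    ext i j
    fin_cases i <;> fin_cases j <;>
      · simp [Matrix.mul_apply, Fin.sum_univ_two, Matrix.map_apply, h00, h01, h10, h11,
          hN00, hN01, hN10, hN11, ← ha, ← hb, ← hc, ← hd]
        push_cast
        field_simp
        ring
  rw [hP]
  have key10 : ((N10 : ℤ) : ZMod p)
      = (d:ZMod p)*((c:ZMod p)*((X:ℤ):ZMod p)+(d:ZMod p)*((Z:ℤ):ZMod p))
        - (c:ZMod p)*((c:ZMod p)*((Y:ℤ):ZMod p)+(d:ZMod p)*((W:ℤ):ZMod p)) := by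
    rw [hN10]; push_cast; ring
  have key11 : ((N11 : ℤ) : ZMod p)
      = -((b:ZMod p)*((c:ZMod p)*((X:ℤ):ZMod p)+(d:ZMod p)*((Z:ℤ):ZMod p)))
        + (a:ZMod p)*((c:ZMod p)*((Y:ℤ):ZMod p)+(d:ZMod p)*((W:ℤ):ZMod p)) := by
    rw [hN11]; push_cast; ring
  have edet : (a:ZMod p)*(d:ZMod p) - (b:ZMod p)*(c:ZMod p) = 1 := by
    exact_mod_cast congrArg (fun n : ℤ => ((n:ZMod p))) hdet
  constructor
  · rintro ⟨m', β, ⟨⟨n1, hb00⟩, ⟨n2, hb11⟩, ⟨n3, hb01⟩, ⟨n4, hb10⟩⟩, heq⟩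
    have e00 : (N00:ℚ)/p = m' + 2*(n1:ℚ) := by
      have := congrFun (congrFun heq 0) 0
      simpa [Matrix.add_apply, Matrix.smul_apply, Matrix.one_apply, hb00] using this
    have e11 : (N11:ℚ)/p = m' + 2*(n2:ℚ) := by
      have := congrFun (congrFun heq 1) 1
      simpa [Matrix.add_apply, Matrix.smul_apply, Matrix.one_apply, hb11] using this
    have e10 : (N10:ℚ)/p = 2*(n4:ℚ) := by
      have := congrFun (congrFun heq 1) 0
      simpa [Matrix.add_apply, Matrix.smul_apply, Matrix.one_apply, hb10] using this
    have d00 : (p:ℤ) ∣ N00 := by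
      refine ⟨m' + 2*n1, ?_⟩
      have : (N00:ℚ) = p * (m' + 2*(n1:ℚ)) := by field_simp at e00; linarith [e00]
      exact_mod_cast this
    have d11 : (p:ℤ) ∣ N11 := by
      refine ⟨m' + 2*n2, ?_⟩
      have : (N11:ℚ) = p * (m' + 2*(n2:ℚ)) := by field_simp at e11; linarith [e11]
      exact_mod_cast this
    have d10 : (p:ℤ) ∣ N10 := by
      refine ⟨2*n4, ?_⟩
      have : (N10:ℚ) = p * (2*(n4:ℚ)) := by field_simp at e10; linarith [e10]
      exact_mod_cast this
    have z10 : ((N10:ℤ):ZMod p) = 0 := (ZMod.intCast_zmod_eq_zero_iff_dvd _ _).mpr d10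
    have z11 : ((N11:ℤ):ZMod p) = 0 := (ZMod.intCast_zmod_eq_zero_iff_dvd _ _).mpr d11
    rw [key10] at z10
    rw [key11] at z11
    exact solve2 z10 z11 edet
  · rintro ⟨hu, hv⟩
    have z10 : ((N10:ℤ):ZMod p) = 0 := by rw [key10, hu, hv]; ring
    have z11 : ((N11:ℤ):ZMod p) = 0 := by rw [key11, hu, hv]; ring
    have d10 : (p:ℤ) ∣ N10 := (ZMod.intCast_zmod_eq_zero_iff_dvd _ _).mp z10
    have d11 : (p:ℤ) ∣ N11 := (ZMod.intCast_zmod_eq_zero_iff_dvd _ _).mp z11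
    have trid : N00 + N11 = X + W := by
      rw [hN00, hN11]; linear_combination (X + W) * hdet
    have d00 : (p:ℤ) ∣ N00 := by
      have : N00 = (X + W) - N11 := by omega
      rw [this]; exact dvd_sub htr d11
    -- parity facts
    have podd : (2:ℤ) ∣ (p:ℤ) - 1 := by
      have := (Fact.out : p.Prime).odd_of_ne_two hp2
      obtain ⟨t, ht⟩ := this
      have hpt : (p:ℤ) = 2*(t:ℤ)+1 := by exact_mod_cast ht
      exact ⟨t, by omega⟩
    obtain ⟨a', ha'⟩ := d00
    obtain ⟨d', hd'⟩ := d11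
    obtain ⟨c', hc'⟩ := d10
    have e00 : N00 - m = 2*(a*d*x - a*c*y + b*d*z - b*c*w) := by
      rw [hN00, hX, hY, hZ, hW]; linear_combination m*hdet
    have e11' : N11 - m = 2*(-(b*c*x) + a*c*y - b*d*z + a*d*w) := by
      rw [hN11, hX, hY, hZ, hW]; linear_combination m*hdet
    have e10' : N10 = 2*(c*d*x - c*c*y + d*d*z - c*d*w) := by
      rw [hN10, hX, hY, hZ, hW]; ring
    have e01' : N01 = 2*(-(a*b*x) + a*a*y - b*b*z + a*b*w) := by
      rw [hN01, hX, hY, hZ, hW]; ring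
    have pa : (2:ℤ) ∣ a' - m := by
      have h1 : (2:ℤ) ∣ p*a' - m := ⟨_, by rw [← ha']; exact e00⟩
      have h2 : a' - m = (p*a' - m) - ((p:ℤ)-1)*a' := by ring
      rw [h2]; exact dvd_sub h1 (Dvd.dvd.mul_right podd a')
    have pd : (2:ℤ) ∣ d' - m := by
      have h1 : (2:ℤ) ∣ p*d' - m := ⟨_, by rw [← hd']; exact e11'⟩
      have h2 : d' - m = (p*d' - m) - ((p:ℤ)-1)*d' := by ring
      rw [h2]; exact dvd_sub h1 (Dvd.dvd.mul_right podd d')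
    have pc : (2:ℤ) ∣ c' := by
      have h1 : (2:ℤ) ∣ p*c' := ⟨_, by rw [← hc']; exact e10'⟩
      have h2 : c' = p*c' - ((p:ℤ)-1)*c' := by ring
      rw [h2]; exact dvd_sub h1 (Dvd.dvd.mul_right podd c')
    obtain ⟨t1, ht1⟩ := pa
    obtain ⟨t2, ht2⟩ := pd
    obtain ⟨t3, ht3⟩ := pc
    refine ⟨m, !![(t1:ℚ), ((-(a*b*x) + a*a*y - b*b*z + a*b*w : ℤ):ℚ)/(p:ℕ);
        (t3:ℚ), (t2:ℚ)], ⟨⟨t1, by simp⟩, ⟨t2, by simp⟩,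
        ⟨-(a*b*x) + a*a*y - b*b*z + a*b*w, by simp⟩, ⟨t3, by simp⟩⟩, ?_⟩
    clear hP hinv key10 key11 z10 z11 hu hv edet h00 h01 h10 h11 htr trid e00 e11' podd
    ext i j
    fin_cases i <;> fin_cases j <;>
        simp [Matrix.add_apply, Matrix.smul_apply, Matrix.one_apply]
    · -- N00/p = m + 2*t1
      have : (N00:ℚ) = p*(m + 2*t1) := by
        have ha2 : a' = m + 2*t1 := by omega
        have : N00 = p*(m+2*t1) := by rw [ha', ha2]
        exact_mod_cast this
      field_simp [this]; linear_combination this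
    · -- N01/p = 2*(...)/p
      have : (N01:ℚ) = 2*((-(a*b*x) + a*a*y - b*b*z + a*b*w : ℤ):ℚ) := by
        exact_mod_cast congrArg (fun n : ℤ => ((n:ℚ))) e01'
      rw [this]; push_cast; ring
    · -- N10/p = 2*t3
      have : (N10:ℚ) = p*(2*t3) := by
        have : N10 = p*(2*t3) := by rw [hc', ht3]
        exact_mod_cast this
      field_simp [this]; linear_combination this
    · have : (N11:ℚ) = p*(m + 2*t2) := by
        have hd2 : d' = m + 2*t2 := by omega
        have : N11 = p*(m+2*t2) := by rw [hd', hd2]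
        exact_mod_cast this
      field_simp [this]; linear_combination this


set_option maxHeartbeats 800000 in
lemma sset_iff (p : ℕ) [Fact p.Prime] (hp2 : p ≠ 2) (m x y z w X Y Z W : ℤ)
    (hX : X = m + 2*x) (hY : Y = 2*y) (hZ : Z = 2*z) (hW : W = m + 2*w)
    (α : Matrix (Fin 2) (Fin 2) ℚ)
    (h00 : α 0 0 = (X:ℚ)/p) (h01 : α 0 1 = (Y:ℚ)/p)
    (h10 : α 1 0 = (Z:ℚ)/p) (h11 : α 1 1 = (W:ℚ)/p) :
    α ∈ Sset ↔ (((X:ℤ):ZMod p) = 0 ∧ ((Y:ℤ):ZMod p) = 0 ∧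
      ((Z:ℤ):ZMod p) = 0 ∧ ((W:ℤ):ZMod p) = 0) := by
  have hp0 : (p:ℚ) ≠ 0 := Nat.cast_ne_zero.mpr (Fact.out : p.Prime).ne_zero
  constructor
  · rintro ⟨m', δ, heq⟩
    have key : ∀ (i j : Fin 2) (V : ℤ), α i j = (V:ℚ)/p → (p:ℤ) ∣ V := by
      intro i j V hV
      have := congrFun (congrFun heq i) j
      rw [hV] at this
      simp only [Matrix.add_apply, Matrix.smul_apply, Matrix.one_apply, Matrix.map_apply,
        smul_eq_mul] at this
      by_cases hij : i = j
      · rw [if_pos hij] at this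
        refine ⟨m' + 2 * δ i j, ?_⟩
        have : (V:ℚ) = p * (m' + 2*(δ i j:ℚ)) := by field_simp at this ⊢; linarith [this]
        exact_mod_cast this
      · rw [if_neg hij] at this
        refine ⟨2 * δ i j, ?_⟩
        have : (V:ℚ) = p * (2*(δ i j:ℚ)) := by field_simp at this ⊢; linarith [this]
        exact_mod_cast this
    refine ⟨(ZMod.intCast_zmod_eq_zero_iff_dvd _ _).mpr (key 0 0 X h00),
      (ZMod.intCast_zmod_eq_zero_iff_dvd _ _).mpr (key 0 1 Y h01),
      (ZMod.intCast_zmod_eq_zero_iff_dvd _ _).mpr (key 1 0 Z h10),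
      (ZMod.intCast_zmod_eq_zero_iff_dvd _ _).mpr (key 1 1 W h11)⟩
  · rintro ⟨zX, zY, zZ, zW⟩
    have dX := (ZMod.intCast_zmod_eq_zero_iff_dvd _ _).mp zX
    have dY := (ZMod.intCast_zmod_eq_zero_iff_dvd _ _).mp zY
    have dZ := (ZMod.intCast_zmod_eq_zero_iff_dvd _ _).mp zZ
    have dW := (ZMod.intCast_zmod_eq_zero_iff_dvd _ _).mp zW
    have podd : (2:ℤ) ∣ (p:ℤ) - 1 := by
      obtain ⟨t, ht⟩ := (Fact.out : p.Prime).odd_of_ne_two hp2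
      have hpt : (p:ℤ) = 2*(t:ℤ)+1 := by exact_mod_cast ht
      exact ⟨t, by omega⟩
    obtain ⟨A', hA'⟩ := dX
    obtain ⟨B', hB'⟩ := dY
    obtain ⟨C', hC'⟩ := dZ
    obtain ⟨D', hD'⟩ := dW
    have pA : (2:ℤ) ∣ A' - m := by
      have h1 : (2:ℤ) ∣ p*A' - m := ⟨x, by omega⟩
      have h2 : A' - m = (p*A' - m) - ((p:ℤ)-1)*A' := by ring
      rw [h2]; exact dvd_sub h1 (Dvd.dvd.mul_right podd A')
    have pD : (2:ℤ) ∣ D' - m := by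
      have h1 : (2:ℤ) ∣ p*D' - m := ⟨w, by omega⟩
      have h2 : D' - m = (p*D' - m) - ((p:ℤ)-1)*D' := by ring
      rw [h2]; exact dvd_sub h1 (Dvd.dvd.mul_right podd D')
    have pB : (2:ℤ) ∣ B' := by
      have h1 : (2:ℤ) ∣ p*B' := ⟨y, by omega⟩
      have h2 : B' = p*B' - ((p:ℤ)-1)*B' := by ring
      rw [h2]; exact dvd_sub h1 (Dvd.dvd.mul_right podd B')
    have pC : (2:ℤ) ∣ C' := by
      have h1 : (2:ℤ) ∣ p*C' := ⟨z, by omega⟩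
      have h2 : C' = p*C' - ((p:ℤ)-1)*C' := by ring
      rw [h2]; exact dvd_sub h1 (Dvd.dvd.mul_right podd C')
    obtain ⟨t1, ht1⟩ := pA
    obtain ⟨t2, ht2⟩ := pD
    obtain ⟨t4, ht4⟩ := pB
    obtain ⟨t3, ht3⟩ := pC
    refine ⟨m, !![t1, t4; t3, t2], ?_⟩
    ext i j
    fin_cases i <;> fin_cases j <;>
      simp [Matrix.add_apply, Matrix.smul_apply, Matrix.one_apply, Matrix.map_apply,
        h00, h01, h10, h11]
    · have : (X:ℚ) = p*(m + 2*t1) := by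
        have h9 : A' = m+2*t1 := by omega
        have : X = p*(m+2*t1) := by rw [hA', h9]
        exact_mod_cast this
      field_simp [this]; linear_combination this
    · have : (Y:ℚ) = p*(2*t4) := by
        have h9 : B' = 2*t4 := by omega
        have : Y = p*(2*t4) := by rw [hB', h9]
        exact_mod_cast this
      field_simp [this]; linear_combination this
    · have : (Z:ℚ) = p*(2*t3) := by
        have h9 : C' = 2*t3 := by omega
        have : Z = p*(2*t3) := by rw [hC', h9]
        exact_mod_cast this
      field_simp [this]; linear_combination this
    · have : (W:ℚ) = p*(m + 2*t2) := by
        have h9 : D' = m+2*t2 := by omega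
        have : W = p*(m+2*t2) := by rw [hD', h9]
        exact_mod_cast this
      field_simp [this]; linear_combination this

lemma unique_vec {p : ℕ} [Fact p.Prime] {Xb Yb Zb Wb c d c' d' : ZMod p}
    (hA : ¬(Xb = 0 ∧ Yb = 0 ∧ Zb = 0 ∧ Wb = 0))
    (h1 : c*Xb + d*Zb = 0) (h2 : c*Yb + d*Wb = 0)
    (h1' : c'*Xb + d'*Zb = 0) (h2' : c'*Yb + d'*Wb = 0) :
    c'*d = d'*c := by
  by_contra he
  have he' : c'*d - d'*c ≠ 0 := fun h => he (by linear_combination h)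
  apply hA
  have hXb : Xb = 0 := by
    have h3 : (c'*d - d'*c) * Xb = 0 := by linear_combination d*h1' - d'*h1
    rcases mul_eq_zero.mp h3 with h | h
    · exact absurd h he'
    · exact h
  have hZb : Zb = 0 := by
    have h3 : (c'*d - d'*c) * Zb = 0 := by linear_combination c'*h1 - c*h1'
    rcases mul_eq_zero.mp h3 with h | h
    · exact absurd h he'
    · exact h
  have hYb : Yb = 0 := by
    have h3 : (c'*d - d'*c) * Yb = 0 := by linear_combination d*h2' - d'*h2
    rcases mul_eq_zero.mp h3 with h | h
    · exact absurd h he'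
    · exact h
  have hWb : Wb = 0 := by
    have h3 : (c'*d - d'*c) * Wb = 0 := by linear_combination c'*h2 - c*h2'
    rcases mul_eq_zero.mp h3 with h | h
    · exact absurd h he'
    · exact h
  exact ⟨hXb, hYb, hZb, hWb⟩

lemma exists_vec {p : ℕ} [Fact p.Prime] {Xb Yb Zb Wb : ZMod p}
    (hdet : Xb*Wb - Yb*Zb = 0)
    (hA : ¬(Xb = 0 ∧ Yb = 0 ∧ Zb = 0 ∧ Wb = 0)) :
    ∃ γ : Matrix.SpecialLinearGroup (Fin 2) ℤ,
      ((γ 1 0 : ℤ):ZMod p) * Xb + ((γ 1 1 : ℤ):ZMod p) * Zb = 0 ∧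
      ((γ 1 0 : ℤ):ZMod p) * Yb + ((γ 1 1 : ℤ):ZMod p) * Wb = 0 := by
  -- first find a nonzero kernel vector (c₀, d₀)
  obtain ⟨c₀, d₀, hcd, k1, k2⟩ : ∃ c₀ d₀ : ZMod p, ¬(c₀ = 0 ∧ d₀ = 0) ∧
      c₀*Xb + d₀*Zb = 0 ∧ c₀*Yb + d₀*Wb = 0 := by
    by_cases hXZ : Xb = 0 ∧ Zb = 0
    · refine ⟨Wb, -Yb, ?_, by rw [hXZ.1, hXZ.2]; ring, by ring⟩
      intro ⟨hW0, hY0⟩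
      exact hA ⟨hXZ.1, by simpa using hY0, hXZ.2, hW0⟩
    · refine ⟨Zb, -Xb, ?_, by ring, by linear_combination -hdet⟩
      intro ⟨hZ0, hX0⟩
      exact hXZ ⟨by simpa using hX0, hZ0⟩
  by_cases hc : c₀ = 0
  · have hd : d₀ ≠ 0 := fun h => hcd ⟨hc, h⟩
    refine ⟨1, ?_, ?_⟩
    · have e0 : (((1 : Matrix.SpecialLinearGroup (Fin 2) ℤ) 1 0 : ℤ):ZMod p) = 0 := by
        norm_num
      have e1 : (((1 : Matrix.SpecialLinearGroup (Fin 2) ℤ) 1 1 : ℤ):ZMod p) = 1 := by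
        norm_num
      rw [e0, e1]
      have : d₀ * Zb = 0 := by linear_combination k1 - Xb*hc
      have hZ0 : Zb = 0 := by
        rcases mul_eq_zero.mp this with h | h
        · exact absurd h hd
        · exact h
      rw [hZ0]; ring
    · have e0 : (((1 : Matrix.SpecialLinearGroup (Fin 2) ℤ) 1 0 : ℤ):ZMod p) = 0 := by
        norm_num
      have e1 : (((1 : Matrix.SpecialLinearGroup (Fin 2) ℤ) 1 1 : ℤ):ZMod p) = 1 := by
        norm_num
      rw [e0, e1]
      have : d₀ * Wb = 0 := by linear_combination k2 - Yb*hc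
      have hW0 : Wb = 0 := by
        rcases mul_eq_zero.mp this with h | h
        · exact absurd h hd
        · exact h
      rw [hW0]; ring
  · refine ⟨rep ((d₀ * c₀⁻¹).val : ℤ), ?_, ?_⟩ <;>
    · have e0 : (((rep ((d₀ * c₀⁻¹).val : ℤ)) 1 0 : ℤ):ZMod p) = 1 := by
        show (((1:ℤ)):ZMod p) = 1; norm_num
      have e1 : (((rep ((d₀ * c₀⁻¹).val : ℤ)) 1 1 : ℤ):ZMod p) = d₀ * c₀⁻¹ := by
        show ((((d₀ * c₀⁻¹).val : ℤ)):ZMod p) = d₀ * c₀⁻¹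
        push_cast
        simp [ZMod.natCast_val, ZMod.cast_id]
      rw [e0, e1]
      first
      | · -- goal : 1 * Xb + d₀c₀⁻¹ * Zb = 0
          have : c₀⁻¹ * (c₀*Xb + d₀*Zb) = 0 := by rw [k1]; ring
          field_simp at this ⊢
          linear_combination this
      | · have : c₀⁻¹ * (c₀*Yb + d₀*Wb) = 0 := by rw [k2]; ring
          field_simp at this ⊢
          linear_combination this


end CosetCount

open CosetCount CongruenceSubgroup in
/-- For `p` an odd prime and `α ∈ p⁻¹S` with `tr(α) ∈ ℤ` and `det(α) ∈ p⁻¹ℤ`, the number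
of cosets `Γ₀(p)γ ∈ Γ₀(p)\SL₂(ℤ)` with `α ∈ γ⁻¹ S(1/p) γ` is `p+1` if `α ∈ S` and `1`
otherwise. -/
theorem coset_count (p : ℕ) [Fact p.Prime] (hp2 : p ≠ 2)
    (α : Matrix (Fin 2) (Fin 2) ℚ)
    (hα : ∃ s ∈ Sset, α = ((p : ℚ))⁻¹ • s)
    (htr : ∃ n : ℤ, α.trace = (n : ℚ))
    (hdet : ∃ n : ℤ, α.det = (n : ℚ) / p) :
    Nat.card {q : Quotient (QuotientGroup.rightRel (CongruenceSubgroup.Gamma0 p)) //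
      ∃ γ : Matrix.SpecialLinearGroup (Fin 2) ℤ,
        Quotient.mk (QuotientGroup.rightRel (CongruenceSubgroup.Gamma0 p)) γ = q ∧
        ((γ : Matrix (Fin 2) (Fin 2) ℤ).map (Int.cast : ℤ → ℚ)) * α *
          (((γ⁻¹ : Matrix.SpecialLinearGroup (Fin 2) ℤ) :
            Matrix (Fin 2) (Fin 2) ℤ).map (Int.cast : ℤ → ℚ)) ∈ SOneOverP p} =
    if α ∈ Sset then p + 1 else 1 := by
  have hp0 : (p:ℚ) ≠ 0 := Nat.cast_ne_zero.mpr (Fact.out : p.Prime).ne_zero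
  obtain ⟨s, ⟨m, g0, rfl⟩, rfl⟩ := hα
  set x : ℤ := g0 0 0 with hx
  set y : ℤ := g0 0 1 with hy
  set z : ℤ := g0 1 0 with hz
  set w : ℤ := g0 1 1 with hw
  set X : ℤ := m + 2*x with hX
  set Y : ℤ := 2*y with hY
  set Z : ℤ := 2*z with hZ
  set W : ℤ := m + 2*w with hW
  set α : Matrix (Fin 2) (Fin 2) ℚ :=
    ((p : ℚ))⁻¹ • ((m : ℚ) • (1 : Matrix (Fin 2) (Fin 2) ℚ) +
      (2 : ℚ) • g0.map (Int.cast : ℤ → ℚ)) with hα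
  have h00 : α 0 0 = (X:ℚ)/p := by
    rw [hα]
    simp [Matrix.smul_apply, Matrix.add_apply, Matrix.one_apply, Matrix.map_apply, hX]
    push_cast
    ring
  have h01 : α 0 1 = (Y:ℚ)/p := by
    rw [hα]
    simp [Matrix.smul_apply, Matrix.add_apply, Matrix.one_apply, Matrix.map_apply, hY]
    push_cast
    ring
  have h10 : α 1 0 = (Z:ℚ)/p := by
    rw [hα]
    simp [Matrix.smul_apply, Matrix.add_apply, Matrix.one_apply, Matrix.map_apply, hZ]
    push_cast
    ring
  have h11 : α 1 1 = (W:ℚ)/p := by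
    rw [hα]
    simp [Matrix.smul_apply, Matrix.add_apply, Matrix.one_apply, Matrix.map_apply, hW]
    push_cast
    ring
  have hptr : (p:ℤ) ∣ X + W := by
    obtain ⟨n, hn⟩ := htr
    rw [Matrix.trace_fin_two, h00, h11] at hn
    refine ⟨n, ?_⟩
    have : (X:ℚ) + (W:ℚ) = p * n := by field_simp at hn; linarith [hn]
    exact_mod_cast this
  have hpdet : ((X:ℤ):ZMod p) * ((W:ℤ):ZMod p) - ((Y:ℤ):ZMod p) * ((Z:ℤ):ZMod p) = 0 := by
    obtain ⟨n, hn⟩ := hdet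
    rw [Matrix.det_fin_two, h00, h11, h01, h10] at hn
    have hZW : X*W - Y*Z = p * n := by
      have : (X:ℚ)*(W:ℚ) - (Y:ℚ)*(Z:ℚ) = p * n := by
        field_simp at hn
        have h2 : ((X:ℚ)*W - Y*Z) * p = ((p:ℚ)*n) * p := by linear_combination (p:ℚ) * hn
        exact mul_right_cancel₀ hp0 h2
      exact_mod_cast this
    have : (((X*W - Y*Z : ℤ)):ZMod p) = 0 := by
      rw [ZMod.intCast_zmod_eq_zero_iff_dvd]
      exact ⟨n, hZW⟩
    push_cast at this
    linear_combination this
  have hSiff := sset_iff p hp2 m x y z w X Y Z W hX hY hZ hW α h00 h01 h10 h11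
  have hMem := fun γ => mem_iff p hp2 m x y z w X Y Z W hX hY hZ hW hptr α h00 h01 h10 h11 γ
  by_cases hS : α ∈ Sset
  · rw [if_pos hS]
    obtain ⟨zX, zY, zZ, zW⟩ := hSiff.mp hS
    have hall : ∀ q : Quotient (QuotientGroup.rightRel (Gamma0 p)),
        ∃ γ : Matrix.SpecialLinearGroup (Fin 2) ℤ,
          Quotient.mk (QuotientGroup.rightRel (Gamma0 p)) γ = q ∧
          ((γ : Matrix (Fin 2) (Fin 2) ℤ).map (Int.cast : ℤ → ℚ)) * α *
            (((γ⁻¹ : Matrix.SpecialLinearGroup (Fin 2) ℤ) :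
              Matrix (Fin 2) (Fin 2) ℤ).map (Int.cast : ℤ → ℚ)) ∈ SOneOverP p := by
      intro q
      obtain ⟨γ, hγ⟩ := Quotient.exists_rep q
      exact ⟨γ, hγ, (hMem γ).mpr (by rw [zX, zY, zZ, zW]; constructor <;> ring)⟩
    rw [Nat.card_congr (Equiv.subtypeUnivEquiv hall)]
    exact card_quot p
  · rw [if_neg hS]
    have hne : ¬(((X:ℤ):ZMod p) = 0 ∧ ((Y:ℤ):ZMod p) = 0 ∧
        ((Z:ℤ):ZMod p) = 0 ∧ ((W:ℤ):ZMod p) = 0) := fun h => hS (hSiff.mpr h)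
    rw [Nat.card_eq_one_iff_unique]
    constructor
    · constructor
      rintro ⟨q, γ, hq, hmem⟩ ⟨q', γ', hq', hmem'⟩
      apply Subtype.ext
      show q = q'
      rw [← hq, ← hq']
      obtain ⟨k1, k2⟩ := (hMem γ).mp hmem
      obtain ⟨k1', k2'⟩ := (hMem γ').mp hmem'
      apply Quotient.sound
      refine QuotientGroup.rightRel_apply.mpr (gamma0_of_f p γ γ' ?_)
      exact unique_vec hne k1 k2 k1' k2'
    · obtain ⟨γ₀, hk1, hk2⟩ := exists_vec hpdet hne
      exact ⟨⟨Quotient.mk _ γ₀, γ₀, rfl, (hMem γ₀).mpr ⟨hk1, hk2⟩⟩⟩
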